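/- (Deterministic version of the ADASS convergence theorem for the full objective.) Let f_1,…,f_n : ℝ^d → ℝ be differentiable and c-weakly convex for some c > 0, set γ = 1/(2c), fix r > 0, and let F(w) = (1/n)∑_{i=1}^n f_i(w) have a minimizer w*. For each t = 1,…,T let S_t ⊆ {1,…,n} be nonempty with S_t^c its complement, let w_t ∈ ℝ^d with w_{t+1} ∈ B(w_t, r), and define f_S(w) = (1/|S|)∑_{i∈S} f_i(w), F̂_t(w) = |S_t|·(f_{S_t}(w) + ‖w − w_t‖²/(2γ)), F̄_t(w) = (n − |S_t|)·(f_{S_t^c}(w) + ‖w − w_t‖²/(2γ)), F_t(w) = n·(f_{[n]}(w) + ‖w − w_t‖²/(2γ)). Let ŵ_t be the unique minimizer over B(w_t, r) of w' ↦ f_{[n]}(w') + ‖w' − w_t‖²/(2γ), and set G_t = (w_t − ŵ_t)/γ, the gradient of the Moreau envelope M_{γ,r}(·; f_{[n]}) at w_t. Assume for each t: (a) F̄_t is ζ_t-insignificant at w_{t+1} with respect to (F_t, B(w_t, r)), with ζ_t ≤ ζ < 1; (b) F(w_t) − F(w*) ≤ δ; (c) F̂_t(w_{t+1}) − F̂_t(w)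 ≤ θ_{1,t}‖w_t − w‖² + θ_{2,t} for all w ∈ B(w_t, r), where θ_{1,t} ≤ n(1 − ζ)/(24·γ·|S_t|) and θ_{2,t} ≤ θ₂/t. Then (2/(T(T+1)))·∑_{t=1}^T t·‖G_t‖² ≤ 16δ/(γ(T+1)) + (48θ₂/(γ·T(T+1)))·∑_{t=1}^T |S_t|/(n·(1 − ζ_t)). -/

import Mathlib

lemma norm_add_smul_sq {d : ℕ} (u v : EuclideanSpace ℝ (Fin d)) (l : ℝ) :
    ‖u + l • v‖ ^ 2 = ‖u‖ ^ 2 + 2 * l * inner ℝ u v + l ^ 2 * ‖v‖ ^ 2 := by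
  rw [norm_add_sq_real, real_inner_smul_right, norm_smul]
  simp [mul_pow, sq_abs]
  ring

lemma telescope_sum (M : ℕ → ℝ) (N : ℕ) :
    ∑ t ∈ Finset.Icc 1 N, (t : ℝ) * (M t - M (t + 1)) =
      (∑ t ∈ Finset.Icc 1 N, M t) - N * M (N + 1) := by
  induction N with
  | zero => simp
  | succ n ih =>
      rw [Finset.sum_Icc_succ_top (by omega), Finset.sum_Icc_succ_top (by omega), ih]
      push_cast
      ring

lemma quad_growth {d : ℕ} (F : EuclideanSpace ℝ (Fin d) → ℝ) (c γ r : ℝ) (hc : 0 < c)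
    (hγ : γ = 1 / (2 * c)) (hr : 0 < r)
    (L : EuclideanSpace ℝ (Fin d) → EuclideanSpace ℝ (Fin d) → ℝ)
    (hL : ∀ m (a : ℝ) v, L m (a • v) = a * L m v)
    (hFwc : ∀ m x, F x ≥ F m + L m (x - m) - c / 2 * ‖x - m‖ ^ 2)
    (w0 wh : EuclideanSpace ℝ (Fin d)) (hwh : wh ∈ Metric.closedBall w0 r)
    (hmin : ∀ x ∈ Metric.closedBall w0 r,
      F wh + ‖wh - w0‖ ^ 2 / (2 * γ) ≤ F x + ‖x - w0‖ ^ 2 / (2 * γ))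
    (x : EuclideanSpace ℝ (Fin d)) (hx : x ∈ Metric.closedBall w0 r) :
    F wh + ‖wh - w0‖ ^ 2 / (2 * γ) + c / 2 * ‖x - wh‖ ^ 2 ≤ F x + ‖x - w0‖ ^ 2 / (2 * γ) := by
  have hγpos : 0 < γ := by rw [hγ]; positivity
  have hcγ : 1 / (2 * γ) = c := by rw [hγ]; field_simp
  -- it suffices to prove for every l ∈ (0,1): c/2*(1-l)*‖x-wh‖^2 ≤ Φx - Φwh
  have key : ∀ l : ℝ, 0 < l → l < 1 →
      c / 2 * (1 - l) * ‖x - wh‖ ^ 2 ≤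
        (F x + ‖x - w0‖ ^ 2 / (2 * γ)) - (F wh + ‖wh - w0‖ ^ 2 / (2 * γ)) := by
    intro l hl0 hl1
    set v := x - wh with hv
    set u := wh - w0 with hu
    set m := wh + l • v with hm
    have hmm : m ∈ Metric.closedBall w0 r := by
      have : m = l • x + (1 - l) • wh := by
        rw [hm, hv]; module
      rw [this]
      exact convex_closedBall w0 r hx hwh hl0.le (by linarith) (by ring)
    have hmin_m := hmin m hmm
    -- expansions
    have hxm : x - m = (1 - l) • v := by rw [hm, hv]; module
    have hwm : wh - m = (-l) • v := by rw [hm]; module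
    have hmw0 : m - w0 = u + l • v := by rw [hm, hu]; module
    have hxw0 : x - w0 = u + (1:ℝ) • v := by rw [hu, hv]; module
    have e1 : ‖m - w0‖ ^ 2 = ‖u‖ ^ 2 + 2 * l * inner ℝ u v + l ^ 2 * ‖v‖ ^ 2 := by
      rw [hmw0, norm_add_smul_sq]
    have e2 : ‖x - w0‖ ^ 2 = ‖u‖ ^ 2 + 2 * 1 * inner ℝ u v + 1 ^ 2 * ‖v‖ ^ 2 := by
      rw [hxw0, norm_add_smul_sq]
    have e3 : ‖(1 - l) • v‖ ^ 2 = (1 - l) ^ 2 * ‖v‖ ^ 2 := by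
      rw [norm_smul]; simp [mul_pow, sq_abs]
    have e4 : ‖(-l) • v‖ ^ 2 = l ^ 2 * ‖v‖ ^ 2 := by
      rw [norm_smul]; simp [mul_pow, sq_abs]
    have h1 := hFwc m x
    have h2 := hFwc m wh
    rw [hxm, hL, e3] at h1
    rw [hwm, hL, e4] at h2
    have hdiv : ∀ y : ℝ, y / (2 * γ) = c * y := by
      intro y; rw [hγ]; field_simp
    rw [e1] at hmin_m
    simp only [hdiv] at hmin_m ⊢
    rw [e2]
    -- abstract the scalar atoms
    set t3 := ‖v‖ ^ 2 with ht3
    set t2 : ℝ := inner ℝ u v with ht2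
    set t1 := ‖u‖ ^ 2 with ht1
    set la := L m v with hla
    set a1 := F x with ha1
    set a2 := F wh with ha2
    set a3 := F m with ha3
    clear_value t3 t2 t1 la a1 a2 a3
    -- linear combination: l*h1 + (1-l)*h2 + hmin_m  gives l * goal
    have p1 : 0 ≤ l * (a1 - (a3 + (1 - l) * la - c / 2 * ((1 - l) ^ 2 * t3))) :=
      mul_nonneg hl0.le (by linarith)
    have p2 : 0 ≤ (1 - l) * (a2 - (a3 + -l * la - c / 2 * (l ^ 2 * t3))) :=
      mul_nonneg (by linarith) (by linarith)
    have p3 : 0 ≤ a3 + c * (t1 + 2 * l * t2 + l ^ 2 * t3) - (a2 + c * t1) := by linarith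
    have hsum : 0 ≤ l * ((a1 + c * (t1 + 2 * 1 * t2 + 1 ^ 2 * t3) -
        (a2 + c * t1)) - c / 2 * (1 - l) * t3) := by
      have hid : l * ((a1 + c * (t1 + 2 * 1 * t2 + 1 ^ 2 * t3) -
          (a2 + c * t1)) - c / 2 * (1 - l) * t3) =
          l * (a1 - (a3 + (1 - l) * la - c / 2 * ((1 - l) ^ 2 * t3))) +
          (1 - l) * (a2 - (a3 + -l * la - c / 2 * (l ^ 2 * t3))) +
          (a3 + c * (t1 + 2 * l * t2 + l ^ 2 * t3) - (a2 + c * t1)) := by ring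
      rw [hid]
      exact add_nonneg (add_nonneg p1 p2) p3
    have h0 := (mul_nonneg_iff_of_pos_left hl0).mp hsum
    linarith
  -- pass to the limit l → 0
  have hfin : ∀ ε > 0, c / 2 * ‖x - wh‖ ^ 2 ≤
      (F x + ‖x - w0‖ ^ 2 / (2 * γ)) - (F wh + ‖wh - w0‖ ^ 2 / (2 * γ)) + ε := by
    intro ε hε
    set K := c / 2 * ‖x - wh‖ ^ 2 with hK
    have hK0 : 0 ≤ K := by positivity
    set l := min (1/2) (ε / (K + 1)) with hldef
    have hl0 : 0 < l := lt_min (by norm_num) (by positivity)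
    have hl1 : l < 1 := lt_of_le_of_lt (min_le_left _ _) (by norm_num)
    have := key l hl0 hl1
    have hlK : l * K ≤ ε := by
      have h1 : l ≤ ε / (K + 1) := min_le_right _ _
      have : l * K ≤ (ε / (K + 1)) * K := by
        exact mul_le_mul_of_nonneg_right h1 hK0
      have h2 : (ε / (K + 1)) * K ≤ ε := by
        rw [div_mul_eq_mul_div, div_le_iff₀ (by linarith)]
        nlinarith
      linarith
    have expand : c / 2 * (1 - l) * ‖x - wh‖ ^ 2 = K - l * K := by rw [hK]; ring
    linarith
  have := le_of_forall_pos_le_add hfin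
  linarith

set_option maxHeartbeats 2000000 in
/-- Deterministic version of Theorem 5 (ADASS convergence for the full objective): with
`c`-weakly convex losses, `γ = 1/(2c)`, insignificance of the discarded part `F̄_t` at
`w_{t+1}` w.r.t. `(F_t, B(w_t, r))` with `ζ_t ≤ ζ < 1`, bounded suboptimality
`F(w_t) − F(w*) ≤ δ`, and the inner-solver guarantee on `F̂_t`, the weighted average of
the squared Moreau-envelope gradients `G_t = (w_t − ŵ_t)/γ` of `f_{[n]}` satisfies
`(2/(T(T+1))) ∑ t‖G_t‖² ≤ 16δ/(γ(T+1)) + (48θ₂/(γT(T+1))) ∑ |S_t|/(n(1−ζ_t))`. -/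
theorem stmt11 (d n T : ℕ) (hn : 0 < n) (hT : 0 < T)
    (f : Fin n → EuclideanSpace ℝ (Fin d) → ℝ)
    (c : ℝ) (hc : 0 < c)
    (hdiff : ∀ i, Differentiable ℝ (f i))
    (hwc : ∀ (i : Fin n) (w w' : EuclideanSpace ℝ (Fin d)),
      f i w' ≥ f i w + fderiv ℝ (f i) w (w' - w) - c / 2 * ‖w' - w‖ ^ 2)
    (γ : ℝ) (hγ : γ = 1 / (2 * c))
    (r : ℝ) (hr : 0 < r)
    (F : EuclideanSpace ℝ (Fin d) → ℝ)
    (hF : ∀ x, F x = (1 / n) * ∑ i, f i x)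
    (wstar : EuclideanSpace ℝ (Fin d)) (hstar : ∀ x, F wstar ≤ F x)
    (S : ℕ → Finset (Fin n)) (hSne : ∀ t ∈ Finset.Icc 1 T, (S t).Nonempty)
    (w : ℕ → EuclideanSpace ℝ (Fin d))
    (hball : ∀ t ∈ Finset.Icc 1 T, w (t + 1) ∈ Metric.closedBall (w t) r)
    (fS : Finset (Fin n) → EuclideanSpace ℝ (Fin d) → ℝ)
    (hfS : ∀ (Q : Finset (Fin n)) (x : EuclideanSpace ℝ (Fin d)),
      fS Q x = (1 / Q.card) * ∑ i ∈ Q, f i x)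
    (Fhat Fbar Ffull : ℕ → EuclideanSpace ℝ (Fin d) → ℝ)
    (hFhat : ∀ t x, Fhat t x = (S t).card * (fS (S t) x + ‖x - w t‖ ^ 2 / (2 * γ)))
    (hFbar : ∀ t x, Fbar t x =
      ((n : ℝ) - (S t).card) * (fS (S t)ᶜ x + ‖x - w t‖ ^ 2 / (2 * γ)))
    (hFfull : ∀ t x, Ffull t x = n * (F x + ‖x - w t‖ ^ 2 / (2 * γ)))
    (what : ℕ → EuclideanSpace ℝ (Fin d))
    (hwhat_mem : ∀ t ∈ Finset.Icc 1 T, what t ∈ Metric.closedBall (w t) r)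
    (hwhat_min : ∀ t ∈ Finset.Icc 1 T, ∀ x ∈ Metric.closedBall (w t) r,
      F (what t) + ‖what t - w t‖ ^ 2 / (2 * γ) ≤ F x + ‖x - w t‖ ^ 2 / (2 * γ))
    (G : ℕ → EuclideanSpace ℝ (Fin d))
    (hG : ∀ t, G t = (1 / γ) • (w t - what t))
    (ζf θ₁ θ₂f : ℕ → ℝ) (ζ δ θ₂ : ℝ) (hζlt : ζ < 1)
    (hins : ∀ t ∈ Finset.Icc 1 T,
      |Fbar t (what t) - Fbar t (w (t + 1))| ≤
        ζf t * (Ffull t (w (t + 1)) - Ffull t (what t)))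
    (hζf : ∀ t ∈ Finset.Icc 1 T, ζf t ≤ ζ)
    (hδ : ∀ t ∈ Finset.Icc 1 T, F (w t) - F wstar ≤ δ)
    (hopt : ∀ t ∈ Finset.Icc 1 T, ∀ x ∈ Metric.closedBall (w t) r,
      Fhat t (w (t + 1)) - Fhat t x ≤ θ₁ t * ‖w t - x‖ ^ 2 + θ₂f t)
    (hθ₁ : ∀ t ∈ Finset.Icc 1 T, θ₁ t ≤ n * (1 - ζ) / (24 * γ * (S t).card))
    (hθ₂ : ∀ t ∈ Finset.Icc 1 T, θ₂f t ≤ θ₂ / t) :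
    2 / (T * (T + 1)) * ∑ t ∈ Finset.Icc 1 T, (t : ℝ) * ‖G t‖ ^ 2 ≤
      16 * δ / (γ * (T + 1)) +
        48 * θ₂ / (γ * T * (T + 1)) *
          ∑ t ∈ Finset.Icc 1 T, (S t).card / (n * (1 - ζf t)) := by
  have hγpos : 0 < γ := by rw [hγ]; positivity
  have hγne : γ ≠ 0 := ne_of_gt hγpos
  have hnR : (0:ℝ) < n := by exact_mod_cast hn
  have hTR : (0:ℝ) < T := by exact_mod_cast hT
  have hcγ : γ * c = 1 / 2 := by rw [hγ]; field_simp
  -- the linear lower-model of F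
  obtain ⟨L, hLdef⟩ : ∃ L : EuclideanSpace ℝ (Fin d) → EuclideanSpace ℝ (Fin d) → ℝ,
      L = fun m y => (1 / (n:ℝ)) * ∑ i, (fderiv ℝ (f i) m) y := ⟨_, rfl⟩
  have hL : ∀ m (a : ℝ) v, L m (a • v) = a * L m v := by
    intro m a v
    simp only [hLdef, map_smul, smul_eq_mul, Finset.mul_sum]
    exact Finset.sum_congr rfl (fun i _ => by ring)
  have hFwc : ∀ m x, F x ≥ F m + L m (x - m) - c / 2 * ‖x - m‖ ^ 2 := by
    intro m x
    have hs : ∑ i, (f i m + (fderiv ℝ (f i) m) (x - m) - c / 2 * ‖x - m‖ ^ 2) ≤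
        ∑ i, f i x := Finset.sum_le_sum (fun i _ => (hwc i m x))
    rw [Finset.sum_sub_distrib, Finset.sum_add_distrib, Finset.sum_const,
      Finset.card_univ, Fintype.card_fin, nsmul_eq_mul] at hs
    have h2 := mul_le_mul_of_nonneg_left hs (by positivity : (0:ℝ) ≤ 1 / n)
    rw [hF, hF, hLdef]
    have hne : (n:ℝ) ≠ 0 := ne_of_gt hnR
    have : (1/(n:ℝ)) * (∑ i, f i m + ∑ i, (fderiv ℝ (f i) m) (x - m) -
        n * (c / 2 * ‖x - m‖ ^ 2)) =
        (1/(n:ℝ)) * ∑ i, f i m + (1/(n:ℝ)) * ∑ i, (fderiv ℝ (f i) m) (x - m) -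
        c / 2 * ‖x - m‖ ^ 2 := by field_simp
    rw [this] at h2
    exact h2
  -- continuity of F
  have hFcont : Continuous F := by
    have : F = fun x => (1 / (n:ℝ)) * ∑ i, f i x := funext hF
    rw [this]
    exact continuous_const.mul (continuous_finset_sum _ fun i _ => (hdiff i).continuous)
  -- minimizer over the ball around w (T+1)
  obtain ⟨z, hz_mem, hz_min⟩ :=
    (isCompact_closedBall (w (T+1)) r).exists_isMinOn
      ⟨w (T+1), Metric.mem_closedBall_self hr.le⟩
      (Continuous.continuousOn (by fun_prop :
        Continuous fun x => F x + ‖x - w (T+1)‖ ^ 2 / (2 * γ)))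
  rw [isMinOn_iff] at hz_min
  -- extended minimizer sequence and Moreau values
  obtain ⟨W, hWdef⟩ : ∃ W : ℕ → EuclideanSpace ℝ (Fin d),
      W = fun t => if t = T + 1 then z else what t := ⟨_, rfl⟩
  obtain ⟨Mv, hMvdef⟩ : ∃ Mv : ℕ → ℝ,
      Mv = fun t => F (W t) + ‖W t - w t‖ ^ 2 / (2 * γ) := ⟨_, rfl⟩
  have hWeq : ∀ t ∈ Finset.Icc 1 T, W t = what t := by
    intro t ht
    rw [Finset.mem_Icc] at ht
    simp only [hWdef]
    rw [if_neg (by omega : t ≠ T + 1)]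
  have hW_min : ∀ t ∈ Finset.Icc 1 (T+1), ∀ x ∈ Metric.closedBall (w t) r,
      F (W t) + ‖W t - w t‖ ^ 2 / (2 * γ) ≤ F x + ‖x - w t‖ ^ 2 / (2 * γ) := by
    intro t ht x hx
    rw [Finset.mem_Icc] at ht
    by_cases h : t = T + 1
    · subst h
      simp only [hWdef, if_pos rfl]
      exact hz_min x hx
    · simp only [hWdef, if_neg h]
      exact hwhat_min t (Finset.mem_Icc.mpr ⟨ht.1, by omega⟩) x hx
  -- decomposition
  have hdec : ∀ t ∈ Finset.Icc 1 T, ∀ x, Ffull t x = Fhat t x + Fbar t x := by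
    intro t ht x
    have hkpos : 0 < (S t).card := Finset.card_pos.mpr (hSne t ht)
    have hkn : (S t).card ≤ n := by
      simpa using Finset.card_le_univ (S t)
    have hkR : (0:ℝ) < ((S t).card : ℝ) := by exact_mod_cast hkpos
    have hcompl : ((S t)ᶜ.card : ℝ) = (n:ℝ) - (S t).card := by
      rw [Finset.card_compl, Fintype.card_fin]
      push_cast [Nat.cast_sub hkn]
      ring
    have hhat : Fhat t x = (∑ i ∈ S t, f i x) + ((S t).card : ℝ) * (‖x - w t‖ ^ 2 / (2 * γ)) := by
      rw [hFhat, hfS]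
      field_simp
    have hbar : Fbar t x = (∑ i ∈ (S t)ᶜ, f i x) +
        ((n:ℝ) - (S t).card) * (‖x - w t‖ ^ 2 / (2 * γ)) := by
      rw [hFbar, hfS, ← hcompl]
      by_cases h0 : (S t)ᶜ.card = 0
      · rw [Finset.card_eq_zero] at h0
        simp [h0]
      · have : ((S t)ᶜ.card : ℝ) ≠ 0 := by exact_mod_cast h0
        field_simp
    have hfull : Ffull t x = (∑ i, f i x) + (n:ℝ) * (‖x - w t‖ ^ 2 / (2 * γ)) := by
      rw [hFfull, hF]
      have hne : (n:ℝ) ≠ 0 := ne_of_gt hnR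
      field_simp
    rw [hhat, hbar, hfull, ← Finset.sum_add_sum_compl (S t) (fun i => f i x)]
    ring
  -- per-step quantities
  obtain ⟨Dq, hDqdef⟩ : ∃ Dq : ℕ → ℝ, Dq = fun t => ‖w t - what t‖ ^ 2 := ⟨_, rfl⟩
  obtain ⟨Ev, hEvdef⟩ : ∃ Ev : ℕ → ℝ, Ev = fun t => θ₂f t / ((n:ℝ) * (1 - ζf t)) := ⟨_, rfl⟩
  have key : ∀ t ∈ Finset.Icc 1 T,
      Dq t / γ ≤ (12/5) * (Mv t - Mv (t+1)) + (24/5) * Ev t + (16/5) * max (Ev t) 0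
      ∧ ((S t).card : ℝ) * (-(Ev t)) ≤ Dq t / (24*γ)
      ∧ Mv t ≤ F wstar + δ := by
    intro t ht
    obtain ⟨ht1, htT⟩ := Finset.mem_Icc.mp ht
    have hWt : W t = what t := hWeq t ht
    have hζt : ζf t ≤ ζ := hζf t ht
    have h1ζ : 0 < 1 - ζf t := by linarith
    have hnz : 0 < (n:ℝ) * (1 - ζf t) := mul_pos hnR h1ζ
    have hkpos : 0 < (S t).card := Finset.card_pos.mpr (hSne t ht)
    obtain ⟨sk, hskdef⟩ : ∃ sk : ℝ, sk = ((S t).card : ℝ) := ⟨_, rfl⟩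
    have hkR : (0:ℝ) < sk := by rw [hskdef]; exact_mod_cast hkpos
    have hk1 : (1:ℝ) ≤ sk := by rw [hskdef]; exact_mod_cast hkpos
    have hwb := hball t ht
    have hwhb := hwhat_mem t ht
    have hwtb : w t ∈ Metric.closedBall (w t) r := Metric.mem_closedBall_self hr.le
    have ht1T : t+1 ∈ Finset.Icc 1 (T+1) := Finset.mem_Icc.mpr ⟨by omega, by omega⟩
    have hD0 : 0 ≤ Dq t := by simp only [hDqdef]; positivity
    -- quadratic growth at w (t+1)
    have qg_w1 := quad_growth F c γ r hc hγ hr L hL hFwc (w t) (what t) hwhb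
      (hwhat_min t ht) (w (t+1)) hwb
    obtain ⟨A0, hA0⟩ : ∃ A0 : ℝ, A0 = F (what t) + ‖what t - w t‖ ^ 2 / (2 * γ) := ⟨_, rfl⟩
    obtain ⟨A1, hA1⟩ : ∃ A1 : ℝ, A1 = F (w (t+1)) + ‖w (t+1) - w t‖ ^ 2 / (2 * γ) := ⟨_, rfl⟩
    have hMvt : Mv t = A0 := by simp only [hMvdef]; rw [hWt, hA0]
    have hP0 : A0 ≤ A1 := by rw [hA0, hA1]; exact hwhat_min t ht (w (t+1)) hwb
    have hDrev : ‖what t - w t‖ ^ 2 = Dq t := by simp only [hDqdef]; rw [norm_sub_rev]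
    -- the key inequality (I)
    have hfull1 : Ffull t (w (t+1)) = n * A1 := by rw [hFfull, hA1]
    have hfull0 : Ffull t (what t) = n * A0 := by rw [hFfull, hA0]
    have habs := (abs_le.mp (hins t ht)).1
    have hd1 := hdec t ht (w (t+1))
    have hd0 := hdec t ht (what t)
    have hhat : Fhat t (w (t+1)) - Fhat t (what t) ≤ θ₁ t * Dq t + θ₂f t := by
      have h := hopt t ht (what t) hwhb
      simp only [hDqdef]
      exact h
    simp only [hfull1, hfull0] at habs hd1 hd0
    have hI : (n:ℝ) * (1 - ζf t) * (A1 - A0) ≤ θ₁ t * Dq t + θ₂f t := by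
      linarith [habs, hd1, hd0, hhat]
    -- bound on θ₁
    have hθ₁t := hθ₁ t ht
    rw [← hskdef] at hθ₁t
    have hb : θ₁ t ≤ (n:ℝ) * (1 - ζf t) / (24 * γ * sk) := by
      refine le_trans hθ₁t ?_
      gcongr
    have hbD : θ₁ t * Dq t ≤ (n:ℝ) * (1 - ζf t) / (24 * γ * sk) * Dq t :=
      mul_le_mul_of_nonneg_right hb hD0
    -- upper bound on A1 - A0
    have hP' : A1 - A0 ≤ Dq t / (24 * γ * sk) + Ev t := by
      have h5 : (n:ℝ) * (1 - ζf t) * (A1 - A0) ≤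
          (n:ℝ) * (1 - ζf t) * (Dq t / (24 * γ * sk)) + θ₂f t := by
        have hq : (n:ℝ) * (1 - ζf t) / (24 * γ * sk) * Dq t =
            (n:ℝ) * (1 - ζf t) * (Dq t / (24 * γ * sk)) := by ring
        linarith [hI, hbD, hq.le, hq.ge]
      have h6 : A1 - A0 ≤ ((n:ℝ) * (1 - ζf t) * (Dq t / (24 * γ * sk)) + θ₂f t) /
          ((n:ℝ) * (1 - ζf t)) := by
        rw [le_div_iff₀ hnz]
        have hq2 : (A1 - A0) * ((n:ℝ) * (1 - ζf t)) = (n:ℝ) * (1 - ζf t) * (A1 - A0) := by ring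
        linarith [h5, hq2.le, hq2.ge]
      have h7 : ((n:ℝ) * (1 - ζf t) * (Dq t / (24 * γ * sk)) + θ₂f t) /
          ((n:ℝ) * (1 - ζf t)) = Dq t / (24 * γ * sk) + Ev t := by
        simp only [hEvdef]
        field_simp
      linarith [h6, h7.le, h7.ge]
    have hsk_le : Dq t / (24 * γ * sk) ≤ Dq t / (24 * γ) := by
      have e1 : Dq t / (24 * γ * sk) = Dq t / (24 * γ) * (1/sk) := by ring
      have e2 : Dq t / (24 * γ) * (1/sk) ≤ Dq t / (24 * γ) * 1 :=
        mul_le_mul_of_nonneg_left ((div_le_one hkR).mpr hk1) (div_nonneg hD0 (by positivity))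
      linarith [e1.le, e1.ge, e2]
    have hPw : A1 - A0 ≤ Dq t / (24 * γ) + Ev t := by linarith
    -- lower bound on Ev (P2)
    have hElb : sk * (-(Ev t)) ≤ Dq t / (24 * γ) := by
      have h8 : -(θ₂f t) ≤ (n:ℝ) * (1 - ζf t) * (Dq t / (24 * γ * sk)) := by
        have hq : (n:ℝ) * (1 - ζf t) / (24 * γ * sk) * Dq t =
            (n:ℝ) * (1 - ζf t) * (Dq t / (24 * γ * sk)) := by ring
        linarith [hI, hbD, mul_nonneg hnz.le (by linarith : (0:ℝ) ≤ A1 - A0), hq.le, hq.ge]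
      have h9 : -(Ev t) ≤ Dq t / (24 * γ * sk) := by
        simp only [hEvdef]
        rw [← neg_div, div_le_iff₀ hnz]
        nlinarith [h8]
      calc sk * (-(Ev t)) ≤ sk * (Dq t / (24 * γ * sk)) :=
            mul_le_mul_of_nonneg_left h9 hkR.le
        _ = Dq t / (24 * γ) := by field_simp
    -- Mv t ≤ F wstar + δ
    have hMle : Mv t ≤ F wstar + δ := by
      have h10 := hwhat_min t ht (w t) hwtb
      rw [sub_self] at h10
      simp only [norm_zero, ne_eq, OfNat.ofNat_ne_zero, not_false_eq_true, zero_pow,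
        zero_div, add_zero] at h10
      have := hδ t ht
      rw [hMvt, hA0]
      linarith
    -- near bound
    have hqg1 : c / 2 * ‖w (t+1) - what t‖ ^ 2 ≤ A1 - A0 := by
      rw [hA0, hA1]; linarith [qg_w1]
    have hnear : ‖w (t+1) - what t‖ ^ 2 ≤ Dq t / 6 + 4 * γ * Ev t := by
      have h11 := mul_le_mul_of_nonneg_left (le_trans hqg1 hPw)
        (by positivity : (0:ℝ) ≤ 4 * γ)
      have hid1 : 4 * γ * (c / 2 * ‖w (t+1) - what t‖ ^ 2) =
          2 * (γ * c) * ‖w (t+1) - what t‖ ^ 2 := by ring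
      have hid2 : 4 * γ * (Dq t / (24 * γ) + Ev t) = Dq t / 6 + 4 * γ * Ev t := by
        field_simp; ring
      rw [hid1, hcγ, hid2] at h11
      linarith
    have hrev2 : ‖what t - w (t+1)‖ ^ 2 = ‖w (t+1) - what t‖ ^ 2 := by rw [norm_sub_rev]
    refine ⟨?_, by rw [← hskdef]; exact hElb, hMle⟩
    by_cases hmem : what t ∈ Metric.closedBall (w (t+1)) r
    · -- case A
      have hMv1 : Mv (t+1) ≤ F (what t) + ‖what t - w (t+1)‖ ^ 2 / (2 * γ) := by
        simp only [hMvdef]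
        exact hW_min (t+1) ht1T (what t) hmem
      have hrec : Mv (t+1) ≤ Mv t - (5/12) * (Dq t / γ) + 2 * Ev t := by
        have h12 : ‖what t - w (t+1)‖ ^ 2 / (2 * γ) ≤ (Dq t / 6 + 4 * γ * Ev t) / (2 * γ) := by
          gcongr
          rw [hrev2]; exact hnear
        have hA0' : F (what t) = A0 - Dq t / (2 * γ) := by
          rw [hA0, hDrev]; ring
        have hid3 : A0 - Dq t / (2 * γ) + (Dq t / 6 + 4 * γ * Ev t) / (2 * γ) =
            A0 - (5/12) * (Dq t / γ) + 2 * Ev t := by field_simp; ring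
        rw [hMvt]
        linarith [hMv1, h12, hA0'.le, hA0'.ge, hid3.le, hid3.ge]
      have hmax1 : Ev t ≤ max (Ev t) 0 := le_max_left _ _
      have hmax2 : (0:ℝ) ≤ max (Ev t) 0 := le_max_right _ _
      linarith
    · -- case B
      have hfar : r < ‖what t - w (t+1)‖ := by
        rw [Metric.mem_closedBall, not_le] at hmem
        rw [← dist_eq_norm]; exact hmem
      have hfar2 : r ^ 2 < ‖w (t+1) - what t‖ ^ 2 := by
        rw [← hrev2]
        exact pow_lt_pow_left₀ hfar hr.le (by norm_num)
      have hDr : Dq t ≤ r ^ 2 := by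
        have hle : ‖w t - what t‖ ≤ r := by
          rw [← dist_eq_norm, dist_comm]
          exact Metric.mem_closedBall.mp hwhb
        rw [hDqdef]
        exact pow_le_pow_left₀ (norm_nonneg _) hle 2
      have h13 : r ^ 2 < Dq t / 6 + 4 * γ * Ev t := lt_of_lt_of_le hfar2 hnear
      have hEpos : 0 < Ev t := by
        by_contra h
        push_neg at h
        have hge : 0 ≤ γ * (-(Ev t)) := mul_nonneg hγpos.le (neg_nonneg.2 h)
        have hrr : 0 < r ^ 2 := by positivity
        linarith [h13, hDr]
      have hDE : Dq t / γ ≤ (24/5) * Ev t := by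
        rw [div_le_iff₀ hγpos]
        linarith [h13, hDr]
      have hw1self : w (t+1) ∈ Metric.closedBall (w (t+1)) r := Metric.mem_closedBall_self hr.le
      have hMv1 : Mv (t+1) ≤ F (w (t+1)) := by
        simp only [hMvdef]
        have h14 := hW_min (t+1) ht1T (w (t+1)) hw1self
        rw [sub_self] at h14
        simp only [norm_zero, ne_eq, OfNat.ofNat_ne_zero, not_false_eq_true, zero_pow,
          zero_div, add_zero] at h14
        exact h14
      have hFw1 : F (w (t+1)) ≤ A1 := by
        rw [hA1]
        have : (0:ℝ) ≤ ‖w (t+1) - w t‖ ^ 2 / (2 * γ) := by positivity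
        linarith
      have hrecB : Mv (t+1) ≤ Mv t + Dq t / (24 * γ) + Ev t := by
        rw [hMvt]; linarith [hMv1, hFw1, hPw]
      have hmax : max (Ev t) 0 = Ev t := max_eq_left hEpos.le
      rw [hmax]
      have hq : Dq t / (24 * γ) = (Dq t / γ) / 24 := by ring
      linarith [hrecB, hDE, hEpos]
  -- telescoping
  have hδ0 : 0 ≤ δ := by
    have h1 := hδ 1 (Finset.mem_Icc.mpr ⟨le_refl 1, hT⟩)
    have h2 := hstar (w 1)
    linarith
  have hMT1 : F wstar ≤ Mv (T+1) := by
    simp only [hMvdef, hWdef]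
    simp only [if_true]
    have h1 := hstar z
    have h2 : 0 ≤ ‖z - w (T+1)‖ ^ 2 / (2 * γ) := by positivity
    linarith
  have hMsum : ∑ t ∈ Finset.Icc 1 T, (t:ℝ) * (Mv t - Mv (t+1)) ≤ T * δ := by
    rw [telescope_sum Mv T]
    have h1 : ∑ t ∈ Finset.Icc 1 T, Mv t ≤ ∑ t ∈ Finset.Icc 1 T, (F wstar + δ) :=
      Finset.sum_le_sum (fun t ht => (key t ht).2.2)
    rw [Finset.sum_const, Nat.card_Icc, nsmul_eq_mul] at h1
    simp only [Nat.add_sub_cancel] at h1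
    have h2 : (T:ℝ) * F wstar ≤ (T:ℝ) * Mv (T+1) := mul_le_mul_of_nonneg_left hMT1 hTR.le
    nlinarith [h1, h2]
  -- per-step weighted bound on t * Ev t
  have htE : ∀ t ∈ Finset.Icc 1 T, (t:ℝ) * Ev t ≤ θ₂ / ((n:ℝ) * (1 - ζf t)) := by
    intro t ht
    obtain ⟨ht1, htT⟩ := Finset.mem_Icc.mp ht
    have htpos : (0:ℝ) < t := by exact_mod_cast ht1
    have h1ζ : 0 < 1 - ζf t := by linarith [hζf t ht]
    have hnz : 0 < (n:ℝ) * (1 - ζf t) := mul_pos hnR h1ζ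
    have h2 : (t:ℝ) * θ₂f t ≤ θ₂ := by
      have h := (le_div_iff₀ htpos).mp (hθ₂ t ht)
      linarith
    simp only [hEvdef]
    rw [mul_div_assoc']
    exact (div_le_div_iff_of_pos_right hnz).mpr h2
  -- the main summed inequality
  have hmain : ∑ t ∈ Finset.Icc 1 T, (t:ℝ) * (Dq t / γ) ≤
      8 * T * δ + 24 * θ₂ * ∑ t ∈ Finset.Icc 1 T,
        ((S t).card : ℝ) / ((n:ℝ) * (1 - ζf t)) := by
    rcases le_or_gt 0 θ₂ with hpos | hneg
    · -- θ₂ ≥ 0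
      have hstep : ∀ t ∈ Finset.Icc 1 T, (t:ℝ) * (Dq t / γ) ≤
          (12/5) * ((t:ℝ) * (Mv t - Mv (t+1))) +
            24 * θ₂ * (((S t).card : ℝ) / ((n:ℝ) * (1 - ζf t))) := by
        intro t ht
        obtain ⟨ht1, htT⟩ := Finset.mem_Icc.mp ht
        have ht0 : (0:ℝ) ≤ t := by positivity
        have hk1 : (1:ℝ) ≤ ((S t).card : ℝ) := by
          exact_mod_cast Finset.card_pos.mpr (hSne t ht)
        have h1ζ : 0 < 1 - ζf t := by linarith [hζf t ht]
        have hnz : 0 < (n:ℝ) * (1 - ζf t) := mul_pos hnR h1ζ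
        have hunn : 0 ≤ θ₂ / ((n:ℝ) * (1 - ζf t)) := div_nonneg hpos hnz.le
        have hP1 := (key t ht).1
        have h3 := mul_le_mul_of_nonneg_left hP1 ht0
        have htE' := htE t ht
        have hmaxE : (t:ℝ) * max (Ev t) 0 ≤ θ₂ / ((n:ℝ) * (1 - ζf t)) := by
          rcases le_total (Ev t) 0 with h | h
          · rw [max_eq_right h]; simpa using hunn
          · rw [max_eq_left h]; exact htE'
        have hsku : θ₂ / ((n:ℝ) * (1 - ζf t)) ≤
            θ₂ * (((S t).card : ℝ) / ((n:ℝ) * (1 - ζf t))) := by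
          have h4 : θ₂ / ((n:ℝ) * (1 - ζf t)) * 1 ≤
              θ₂ / ((n:ℝ) * (1 - ζf t)) * ((S t).card : ℝ) :=
            mul_le_mul_of_nonneg_left hk1 hunn
          have h5 : θ₂ / ((n:ℝ) * (1 - ζf t)) * ((S t).card : ℝ) =
              θ₂ * (((S t).card : ℝ) / ((n:ℝ) * (1 - ζf t))) := by ring
          linarith [h4, h5.le, h5.ge]
        have hsknn : 0 ≤ θ₂ * (((S t).card : ℝ) / ((n:ℝ) * (1 - ζf t))) := by
          apply mul_nonneg hpos
          positivity
        have hq : (t:ℝ) * ((12/5) * (Mv t - Mv (t+1)) + (24/5) * Ev t +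
            (16/5) * max (Ev t) 0) = (12/5) * ((t:ℝ) * (Mv t - Mv (t+1))) +
            (24/5) * ((t:ℝ) * Ev t) + (16/5) * ((t:ℝ) * max (Ev t) 0) := by ring
        linarith [h3, hq.le, hq.ge, htE', hmaxE, hsku, hsknn]
      have hs1 := Finset.sum_le_sum hstep
      rw [Finset.sum_add_distrib, ← Finset.mul_sum, ← Finset.mul_sum] at hs1
      nlinarith [hs1, hMsum, mul_nonneg hTR.le hδ0]
    · -- θ₂ < 0
      have hstep : ∀ t ∈ Finset.Icc 1 T, (t:ℝ) * (Dq t / γ) -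
          24 * θ₂ * (((S t).card : ℝ) / ((n:ℝ) * (1 - ζf t))) ≤
          (24/5) * ((t:ℝ) * (Mv t - Mv (t+1))) := by
        intro t ht
        obtain ⟨ht1, htT⟩ := Finset.mem_Icc.mp ht
        have htpos : (0:ℝ) < t := by exact_mod_cast ht1
        have ht0 : (0:ℝ) ≤ t := htpos.le
        have hk0 : (0:ℝ) ≤ ((S t).card : ℝ) := by positivity
        have h1ζ : 0 < 1 - ζf t := by linarith [hζf t ht]
        have hnz : 0 < (n:ℝ) * (1 - ζf t) := mul_pos hnR h1ζ
        have htE' := htE t ht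
        have hudneg : θ₂ / ((n:ℝ) * (1 - ζf t)) < 0 := div_neg_of_neg_of_pos hneg hnz
        have hEneg : Ev t < 0 := by
          by_contra h
          push_neg at h
          have : 0 ≤ (t:ℝ) * Ev t := mul_nonneg ht0 h
          linarith
        have hmax0 : max (Ev t) 0 = 0 := max_eq_right hEneg.le
        have hP1 := (key t ht).1
        rw [hmax0] at hP1
        have h3 := mul_le_mul_of_nonneg_left hP1 ht0
        have hP2 := (key t ht).2.1
        have h4 : -θ₂ ≤ (t:ℝ) * (-(θ₂f t)) := by
          have h := (le_div_iff₀ htpos).mp (hθ₂ t ht)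
          nlinarith [h]
        have h5 : (-θ₂) * (((S t).card : ℝ) / ((n:ℝ) * (1 - ζf t))) ≤
            ((t:ℝ) * (-(θ₂f t))) * (((S t).card : ℝ) / ((n:ℝ) * (1 - ζf t))) :=
          mul_le_mul_of_nonneg_right h4 (by positivity)
        have h6 : ((t:ℝ) * (-(θ₂f t))) * (((S t).card : ℝ) / ((n:ℝ) * (1 - ζf t))) =
            (t:ℝ) * (((S t).card : ℝ) * (-(Ev t))) := by
          simp only [hEvdef]
          field_simp
        have h7 : (t:ℝ) * (((S t).card : ℝ) * (-(Ev t))) ≤ (t:ℝ) * (Dq t / (24 * γ)) :=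
          mul_le_mul_of_nonneg_left hP2 ht0
        have hq : (t:ℝ) * ((12/5) * (Mv t - Mv (t+1)) + (24/5) * Ev t + (16/5) * 0) =
            (12/5) * ((t:ℝ) * (Mv t - Mv (t+1))) + (24/5) * ((t:ℝ) * Ev t) := by ring
        have hq2 : (t:ℝ) * (Dq t / (24 * γ)) = ((t:ℝ) * (Dq t / γ)) / 24 := by ring
        linarith [h3, hq.le, hq.ge, h5, h6.le, h6.ge, h7, hq2.le, hq2.ge, htE', hudneg]
      have hs1 := Finset.sum_le_sum hstep
      rw [Finset.sum_sub_distrib, ← Finset.mul_sum, ← Finset.mul_sum] at hs1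
      nlinarith [hs1, hMsum, mul_nonneg hTR.le hδ0]
  -- convert to the goal
  have hGsum : ∑ t ∈ Finset.Icc 1 T, (t:ℝ) * ‖G t‖ ^ 2 =
      ∑ t ∈ Finset.Icc 1 T, (t:ℝ) * (Dq t / γ ^ 2) := by
    apply Finset.sum_congr rfl
    intro t _
    rw [hG t, norm_smul]
    simp only [hDqdef]
    rw [Real.norm_eq_abs, abs_of_pos (by positivity : (0:ℝ) < 1/γ), mul_pow]
    ring
  rw [hGsum]
  obtain ⟨SW, hSW⟩ : ∃ SW : ℝ, SW = ∑ t ∈ Finset.Icc 1 T,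
      ((S t).card : ℝ) / ((n:ℝ) * (1 - ζf t)) := ⟨_, rfl⟩
  rw [← hSW] at hmain ⊢
  have e1 : ∑ t ∈ Finset.Icc 1 T, (t:ℝ) * (Dq t / γ ^ 2) =
      (1/γ) * ∑ t ∈ Finset.Icc 1 T, (t:ℝ) * (Dq t / γ) := by
    rw [Finset.mul_sum]
    apply Finset.sum_congr rfl
    intro t _
    ring
  have hco1 : (0:ℝ) ≤ 1/γ := by positivity
  have hco2 : (0:ℝ) ≤ 2 / ((T:ℝ) * ((T:ℝ) + 1)) := by positivity
  have e2 := mul_le_mul_of_nonneg_left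
    (mul_le_mul_of_nonneg_left hmain hco1) hco2
  have hT0 : (T:ℝ) ≠ 0 := ne_of_gt hTR
  have hT1 : (T:ℝ) + 1 ≠ 0 := by positivity
  have e3 : 2 / ((T:ℝ) * ((T:ℝ) + 1)) * ((1/γ) * (8 * T * δ + 24 * θ₂ * SW)) =
      16 * δ / (γ * ((T:ℝ) + 1)) + 48 * θ₂ / (γ * (T:ℝ) * ((T:ℝ) + 1)) * SW := by
    field_simp
    ring
  rw [e1]
  linarith [e2, e3.le, e3.ge]
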